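/- arXiv:2112.04183 — 6 statements merged into one kernel-verified Lean document; each statement's English description precedes it below -/
import Mathlib

section
/- The directed path on three vertices (vertices a, b, c with arcs (a,b) and (b,c) only) has directed clique-width exactly 3; in particular it cannot be constructed with a directed clique-width 2-expression. -/
/-- Arc relation of the induced subdigraph on a vertex set `S`. -/
def restrict (A : ℕ → ℕ → Prop) (S : Finset ℕ) : ℕ → ℕ → Prop :=
  fun x y => A x y ∧ x ∈ S ∧ y ∈ S

/-- `walkLen A n u v`: there is a directed walk of length `n` from `u` to `v`. -/
def walkLen (A : ℕ → ℕ → Prop) : ℕ → ℕ → ℕ → Prop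
  | 0, u, v => u = v
  | n + 1, u, v => ∃ w, A u w ∧ walkLen A n w v

/-- `v` is reachable from `u` by a directed walk. -/
def Reach (A : ℕ → ℕ → Prop) (u v : ℕ) : Prop :=
  ∃ n, walkLen A n u v

/-- Directed distance: length of a shortest directed walk (= shortest directed path). -/
noncomputable def ddist (A : ℕ → ℕ → Prop) (u v : ℕ) : ℕ :=
  sInf {n | walkLen A n u v}

/-- `x` and `y` are directed twins: `N⁻(x)\{y} = N⁻(y)\{x}` and `N⁺(x)\{y} = N⁺(y)\{x}`. -/
def DTwins (A : ℕ → ℕ → Prop) (x y : ℕ) : Prop :=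
  x ≠ y ∧
    {w | A w x} \ {y} = {w | A w y} \ {x} ∧
    {w | A x w} \ {y} = {w | A y w} \ {x}

/-- The arc relation obtained by adding a new vertex `u` as a directed twin of `v`;
`auv`, `avu` determine which of the arcs `(u,v)`, `(v,u)` are present (any of the
four adjacency patterns between the twins). -/
def twinArc (A : ℕ → ℕ → Prop) (v u : ℕ) (auv avu : Prop) : ℕ → ℕ → Prop :=
  fun x y => A x y ∨ (x = u ∧ y = v ∧ auv) ∨ (x = v ∧ y = u ∧ avu) ∨
    (x = u ∧ A v y) ∨ (y = u ∧ A x v)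

/-- Directed co-graphs: single vertices, disjoint union, series and order composition. -/
inductive DCo : Finset ℕ → (ℕ → ℕ → Prop) → Prop
  | single (v : ℕ) : DCo {v} (fun _ _ => False)
  | union {V₁ V₂ : Finset ℕ} {A₁ A₂ : ℕ → ℕ → Prop} :
      Disjoint V₁ V₂ → DCo V₁ A₁ → DCo V₂ A₂ →
      DCo (V₁ ∪ V₂) (fun x y => A₁ x y ∨ A₂ x y)
  | series {V₁ V₂ : Finset ℕ} {A₁ A₂ : ℕ → ℕ → Prop} :
      Disjoint V₁ V₂ → DCo V₁ A₁ → DCo V₂ A₂ →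
      DCo (V₁ ∪ V₂)
        (fun x y => A₁ x y ∨ A₂ x y ∨ (x ∈ V₁ ∧ y ∈ V₂) ∨ (x ∈ V₂ ∧ y ∈ V₁))
  | order {V₁ V₂ : Finset ℕ} {A₁ A₂ : ℕ → ℕ → Prop} :
      Disjoint V₁ V₂ → DCo V₁ A₁ → DCo V₂ A₂ →
      DCo (V₁ ∪ V₂) (fun x y => A₁ x y ∨ A₂ x y ∨ (x ∈ V₁ ∧ y ∈ V₂))

/-- Extended directed co-graphs: additionally closed under directed union. -/
inductive ExtDCo : Finset ℕ → (ℕ → ℕ → Prop) → Prop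
  | single (v : ℕ) : ExtDCo {v} (fun _ _ => False)
  | union {V₁ V₂ : Finset ℕ} {A₁ A₂ : ℕ → ℕ → Prop} :
      Disjoint V₁ V₂ → ExtDCo V₁ A₁ → ExtDCo V₂ A₂ →
      ExtDCo (V₁ ∪ V₂) (fun x y => A₁ x y ∨ A₂ x y)
  | series {V₁ V₂ : Finset ℕ} {A₁ A₂ : ℕ → ℕ → Prop} :
      Disjoint V₁ V₂ → ExtDCo V₁ A₁ → ExtDCo V₂ A₂ →
      ExtDCo (V₁ ∪ V₂)
        (fun x y => A₁ x y ∨ A₂ x y ∨ (x ∈ V₁ ∧ y ∈ V₂) ∨ (x ∈ V₂ ∧ y ∈ V₁))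
  | order {V₁ V₂ : Finset ℕ} {A₁ A₂ : ℕ → ℕ → Prop} :
      Disjoint V₁ V₂ → ExtDCo V₁ A₁ → ExtDCo V₂ A₂ →
      ExtDCo (V₁ ∪ V₂) (fun x y => A₁ x y ∨ A₂ x y ∨ (x ∈ V₁ ∧ y ∈ V₂))
  | dUnion {V₁ V₂ : Finset ℕ} {A₁ A₂ : ℕ → ℕ → Prop} (R : ℕ → ℕ → Prop) :
      Disjoint V₁ V₂ → ExtDCo V₁ A₁ → ExtDCo V₂ A₂ →
      ExtDCo (V₁ ∪ V₂) (fun x y => A₁ x y ∨ A₂ x y ∨ (x ∈ V₁ ∧ y ∈ V₂ ∧ R x y))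

/-- Digraphs constructible from single vertices by disjoint union and adding directed twins. -/
inductive TwinBuilt : Finset ℕ → (ℕ → ℕ → Prop) → Prop
  | single (v : ℕ) : TwinBuilt {v} (fun _ _ => False)
  | union {V₁ V₂ : Finset ℕ} {A₁ A₂ : ℕ → ℕ → Prop} :
      Disjoint V₁ V₂ → TwinBuilt V₁ A₁ → TwinBuilt V₂ A₂ →
      TwinBuilt (V₁ ∪ V₂) (fun x y => A₁ x y ∨ A₂ x y)
  | twin {V : Finset ℕ} {A : ℕ → ℕ → Prop} (v u : ℕ) (auv avu : Prop) :
      v ∈ V → u ∉ V → TwinBuilt V A →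
      TwinBuilt (insert u V) (twinArc A v u auv avu)

/-- Twin-distance-hereditary digraphs: built from a single vertex by disjoint union,
adding directed twins, and adding pendant plus / pendant minus vertices. -/
inductive TwinDH : Finset ℕ → (ℕ → ℕ → Prop) → Prop
  | single (v : ℕ) : TwinDH {v} (fun _ _ => False)
  | union {V₁ V₂ : Finset ℕ} {A₁ A₂ : ℕ → ℕ → Prop} :
      Disjoint V₁ V₂ → TwinDH V₁ A₁ → TwinDH V₂ A₂ →
      TwinDH (V₁ ∪ V₂) (fun x y => A₁ x y ∨ A₂ x y)
  | twin {V : Finset ℕ} {A : ℕ → ℕ → Prop} (v u : ℕ) (auv avu : Prop) :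
      v ∈ V → u ∉ V → TwinDH V A →
      TwinDH (insert u V) (twinArc A v u auv avu)
  | pendPlus {V : Finset ℕ} {A : ℕ → ℕ → Prop} (a u : ℕ) :
      a ∈ V → u ∉ V → TwinDH V A →
      TwinDH (insert u V) (fun x y => A x y ∨ (x = u ∧ y = a))
  | pendMinus {V : Finset ℕ} {A : ℕ → ℕ → Prop} (a u : ℕ) :
      a ∈ V → u ∉ V → TwinDH V A →
      TwinDH (insert u V) (fun x y => A x y ∨ (x = a ∧ y = u))

/-- Undirected distance-hereditary graphs, via the recursive characterization:
built from a single vertex by pendant vertices, false twins and true twins. -/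
inductive UDH : Finset ℕ → (ℕ → ℕ → Prop) → Prop
  | single (v : ℕ) : UDH {v} (fun _ _ => False)
  | pendant {V : Finset ℕ} {E : ℕ → ℕ → Prop} (a u : ℕ) :
      a ∈ V → u ∉ V → UDH V E →
      UDH (insert u V) (fun x y => E x y ∨ (x = u ∧ y = a) ∨ (x = a ∧ y = u))
  | falseTwin {V : Finset ℕ} {E : ℕ → ℕ → Prop} (v u : ℕ) :
      v ∈ V → u ∉ V → UDH V E →
      UDH (insert u V) (fun x y => E x y ∨ (x = u ∧ E v y) ∨ (y = u ∧ E x v))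
  | trueTwin {V : Finset ℕ} {E : ℕ → ℕ → Prop} (v u : ℕ) :
      v ∈ V → u ∉ V → UDH V E →
      UDH (insert u V)
        (fun x y => E x y ∨ (x = u ∧ E v y) ∨ (y = u ∧ E x v) ∨
          (x = u ∧ y = v) ∨ (x = v ∧ y = u))

/-- The induced subdigraph on `C` is strongly connected. -/
def StronglyConn (A : ℕ → ℕ → Prop) (C : Finset ℕ) : Prop :=
  ∀ u ∈ C, ∀ v ∈ C, Reach (restrict A C) u v

/-- `C` is a strong component of the digraph with vertex set `V` and arcs `A`. -/
def IsStrongComponent (A : ℕ → ℕ → Prop) (V C : Finset ℕ) : Prop :=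
  C.Nonempty ∧ C ⊆ V ∧ StronglyConn A C ∧
    ∀ D, C ⊆ D → D ⊆ V → StronglyConn A D → D = C

/-- The induced subdigraph on `S` is weakly connected. -/
def WeaklyConn (A : ℕ → ℕ → Prop) (S : Finset ℕ) : Prop :=
  S.Nonempty ∧ ∀ u ∈ S, ∀ v ∈ S,
    Relation.ReflTransGen (fun x y => restrict A S x y ∨ restrict A S y x) u v

/-- The induced subdigraph on `V` is acyclic. -/
def AcyclicOn (A : ℕ → ℕ → Prop) (V : Finset ℕ) : Prop :=
  ∀ v ∈ V, ∀ n, 0 < n → ¬ walkLen (restrict A V) n v v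

/-- `CRle A V r`: the cycle rank of the digraph `(V, A)` is at most `r`.
This is the standard recursive definition: acyclic digraphs have rank 0, digraphs
decompose into their strong components, and deleting a vertex decreases rank by
at most one. -/
inductive CRle (A : ℕ → ℕ → Prop) : Finset ℕ → ℕ → Prop
  | base {V : Finset ℕ} {r : ℕ} : AcyclicOn A V → CRle A V r
  | scc {V : Finset ℕ} {r : ℕ} :
      (∀ C, IsStrongComponent A V C → CRle A C r) → CRle A V r
  | step {V : Finset ℕ} {r : ℕ} (v : ℕ) :
      v ∈ V → CRle A (V.erase v) r → CRle A V (r + 1)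

/-- The cycle rank of the digraph `(V, A)`. -/
noncomputable def cycleRank (A : ℕ → ℕ → Prop) (V : Finset ℕ) : ℕ :=
  sInf {r | CRle A V r}

/-- `CW k V A f`: the `k`-labeled digraph with vertices `V`, arcs `A` and labeling `f`
is constructible by a directed clique-width `k`-expression. -/
inductive CW (k : ℕ) : Finset ℕ → (ℕ → ℕ → Prop) → (ℕ → Fin k) → Prop
  | vertex (v : ℕ) (a : Fin k) : CW k {v} (fun _ _ => False) (fun _ => a)
  | union {V₁ V₂ : Finset ℕ} {A₁ A₂ : ℕ → ℕ → Prop} {f₁ f₂ : ℕ → Fin k} :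
      Disjoint V₁ V₂ → CW k V₁ A₁ f₁ → CW k V₂ A₂ f₂ →
      CW k (V₁ ∪ V₂) (fun x y => A₁ x y ∨ A₂ x y)
        (fun x => if x ∈ V₁ then f₁ x else f₂ x)
  | addArcs {V : Finset ℕ} {A : ℕ → ℕ → Prop} {f : ℕ → Fin k} (a b : Fin k) :
      a ≠ b → CW k V A f →
      CW k V (fun x y => A x y ∨ (x ∈ V ∧ y ∈ V ∧ f x = a ∧ f y = b)) f
  | relabel {V : Finset ℕ} {A : ℕ → ℕ → Prop} {f : ℕ → Fin k} (a b : Fin k) :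
      CW k V A f →
      CW k V A (fun x => if f x = a then b else f x)


/-- Arcs of a CW-constructed graph stay inside the vertex set. -/
lemma cw_mem {k : ℕ} {V : Finset ℕ} {A : ℕ → ℕ → Prop} {f : ℕ → Fin k}
    (h : CW k V A f) : ∀ x y, A x y → x ∈ V ∧ y ∈ V := by
  induction h with
  | vertex v a => intro x y hxy; exact hxy.elim
  | union hd h1 h2 ih1 ih2 =>
      intro x y hxy
      rcases hxy with h | h
      · exact ⟨Finset.mem_union_left _ (ih1 x y h).1, Finset.mem_union_left _ (ih1 x y h).2⟩
      · exact ⟨Finset.mem_union_right _ (ih2 x y h).1, Finset.mem_union_right _ (ih2 x y h).2⟩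
  | addArcs a b hab h ih =>
      intro x y hxy
      rcases hxy with h' | h'
      · exact ih x y h'
      · exact ⟨h'.1, h'.2.1⟩
  | relabel a b h ih => exact ih

/-- No induced directed P3. -/
def NoP3 (A : ℕ → ℕ → Prop) : Prop :=
  ∀ x y z, x ≠ y → y ≠ z → x ≠ z → A x y → A y z →
    ¬ A x z → ¬ A z x → ¬ A y x → ¬ A z y → False

lemma fin_two_cases {k : ℕ} (hk : k ≤ 2) (a b c : Fin k) (hab : a ≠ b) :
    c = a ∨ c = b := by
  have h1 : a.val ≠ b.val := fun h => hab (Fin.ext h)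
  have := a.isLt; have := b.isLt; have := c.isLt
  have : c.val = a.val ∨ c.val = b.val := by omega
  exact this.imp Fin.ext Fin.ext

lemma cw2_noP3 {k : ℕ} (hk : k ≤ 2) {V : Finset ℕ} {A : ℕ → ℕ → Prop}
    {f : ℕ → Fin k} (h : CW k V A f) : NoP3 A := by
  induction h with
  | vertex v a => intro x y z _ _ _ hxy; exact hxy.elim
  | union hd h1 h2 ih1 ih2 =>
      intro x y z nxy nyz nxz hxy hyz hxz hzx hyx hzy
      rcases hxy with hxy | hxy <;> rcases hyz with hyz | hyz
      · exact ih1 x y z nxy nyz nxz hxy hyz (fun h => hxz (Or.inl h))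
          (fun h => hzx (Or.inl h)) (fun h => hyx (Or.inl h)) (fun h => hzy (Or.inl h))
      · exact absurd (cw_mem h2 y z hyz).1
          (Finset.disjoint_left.mp hd (cw_mem h1 x y hxy).2)
      · exact absurd (cw_mem h1 y z hyz).1
          (Finset.disjoint_right.mp hd (cw_mem h2 x y hxy).2)
      · exact ih2 x y z nxy nyz nxz hxy hyz (fun h => hxz (Or.inr h))
          (fun h => hzx (Or.inr h)) (fun h => hyx (Or.inr h)) (fun h => hzy (Or.inr h))
  | @addArcs V A f a b hab h ih =>
      intro x y z nxy nyz nxz hxy hyz hxz hzx hyx hzy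
      -- memberships
      have hxV : x ∈ V := by
        rcases hxy with h' | h'
        · exact (cw_mem h x y h').1
        · exact h'.1
      have hyV : y ∈ V := by
        rcases hxy with h' | h'
        · exact (cw_mem h x y h').2
        · exact h'.2.1
      have hzV : z ∈ V := by
        rcases hyz with h' | h'
        · exact (cw_mem h y z h').2
        · exact h'.2.1
      have hAxy : A x y := by
        rcases hxy with h' | h'
        · exact h'
        · -- new arc x→y : f x = a, f y = b
          exfalso
          rcases fin_two_cases hk a b (f z) hab with hz | hz
          · exact hzy (Or.inr ⟨hzV, hyV, hz, h'.2.2.2⟩)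
          · exact hxz (Or.inr ⟨hxV, hzV, h'.2.2.1, hz⟩)
      have hAyz : A y z := by
        rcases hyz with h' | h'
        · exact h'
        · exfalso
          rcases fin_two_cases hk a b (f x) hab with hx | hx
          · exact hxz (Or.inr ⟨hxV, hzV, hx, h'.2.2.2⟩)
          · exact hyx (Or.inr ⟨hyV, hxV, h'.2.2.1, hx⟩)
      exact ih x y z nxy nyz nxz hAxy hAyz (fun h' => hxz (Or.inl h'))
        (fun h' => hzx (Or.inl h')) (fun h' => hyx (Or.inl h')) (fun h' => hzy (Or.inl h'))
  | relabel a b h ih => exact ih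

theorem stmt_13 :
    (∃ f : ℕ → Fin 3, CW 3 ({0, 1, 2} : Finset ℕ)
        (fun x y => (x = 0 ∧ y = 1) ∨ (x = 1 ∧ y = 2)) f) ∧
    ∀ k : ℕ, (∃ f : ℕ → Fin k, CW k ({0, 1, 2} : Finset ℕ)
        (fun x y => (x = 0 ∧ y = 1) ∨ (x = 1 ∧ y = 2)) f) → 3 ≤ k := by
  constructor
  · -- construction with 3 labels
    -- vertex 0 with label 0, vertex 1 with label 1
    have h0 : CW 3 {0} (fun _ _ => False) (fun _ => (0 : Fin 3)) := CW.vertex 0 0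
    have h1 : CW 3 {1} (fun _ _ => False) (fun _ => (1 : Fin 3)) := CW.vertex 1 1
    have h2 : CW 3 {2} (fun _ _ => False) (fun _ => (2 : Fin 3)) := CW.vertex 2 2
    have d01 : Disjoint ({0} : Finset ℕ) {1} := by decide
    have hu : CW 3 ({0} ∪ {1}) (fun x y => False ∨ False)
        (fun x => if x ∈ ({0} : Finset ℕ) then (0 : Fin 3) else 1) :=
      CW.union d01 h0 h1
    have ha : CW 3 ({0} ∪ {1})
        (fun x y => (False ∨ False) ∨ (x ∈ ({0} ∪ {1} : Finset ℕ) ∧ y ∈ ({0} ∪ {1} : Finset ℕ) ∧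
          (if x ∈ ({0} : Finset ℕ) then (0 : Fin 3) else 1) = 0 ∧
          (if y ∈ ({0} : Finset ℕ) then (0 : Fin 3) else 1) = 1))
        (fun x => if x ∈ ({0} : Finset ℕ) then (0 : Fin 3) else 1) :=
      CW.addArcs 0 1 (by decide) hu
    have d012 : Disjoint (({0} ∪ {1}) : Finset ℕ) {2} := by decide
    have hu2 := CW.union d012 ha h2
    have ha2 := CW.addArcs (1 : Fin 3) 2 (by decide) hu2
    -- now massage the vertex set and arc relation
    have hV : ({0, 1, 2} : Finset ℕ) = {0} ∪ {1} ∪ {2} := by decide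
    have hA : (fun x y => (x = 0 ∧ y = 1) ∨ (x = 1 ∧ y = 2) : ℕ → ℕ → Prop)
        = (fun x y =>
          (((False ∨ False) ∨
              x ∈ ({0} ∪ {1} : Finset ℕ) ∧ y ∈ ({0} ∪ {1} : Finset ℕ) ∧
                (if x ∈ ({0} : Finset ℕ) then (0 : Fin 3) else 1) = 0 ∧
                (if y ∈ ({0} : Finset ℕ) then (0 : Fin 3) else 1) = 1) ∨
            False) ∨
          x ∈ ({0} ∪ {1} ∪ {2} : Finset ℕ) ∧
            y ∈ ({0} ∪ {1} ∪ {2} : Finset ℕ) ∧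
              (if x ∈ ({0} ∪ {1} : Finset ℕ) then
                if x ∈ ({0} : Finset ℕ) then (0 : Fin 3) else 1 else 2) = 1 ∧
              (if y ∈ ({0} ∪ {1} : Finset ℕ) then
                if y ∈ ({0} : Finset ℕ) then (0 : Fin 3) else 1 else 2) = 2) := by
      funext x y
      rw [eq_iff_iff]
      constructor
      · rintro (⟨rfl, rfl⟩ | ⟨rfl, rfl⟩) <;> decide
      · rintro ((((h | h) | ⟨hx, hy, hfx, hfy⟩) | h) | ⟨hx, hy, hfx, hfy⟩)
        · exact h.elim
        · exact h.elim
        · left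
          simp only [Finset.mem_union, Finset.mem_singleton] at hx hy
          rcases hx with rfl | rfl <;> rcases hy with rfl | rfl <;> revert hfx hfy <;> decide
        · exact h.elim
        · right
          simp only [Finset.mem_union, Finset.mem_singleton] at hx hy
          rcases hx with (rfl | rfl) | rfl <;> rcases hy with (rfl | rfl) | rfl <;> revert hfx hfy <;> decide
    rw [hV, hA]
    exact ⟨_, ha2⟩
  · intro k ⟨f, hcw⟩
    by_contra hlt
    have hk : k ≤ 2 := by omega
    exact cw2_noP3 hk hcw 0 1 2 (by decide) (by decide) (by decide)
      (Or.inl ⟨rfl, rfl⟩) (Or.inr ⟨rfl, rfl⟩)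
      (by rintro (⟨h,_⟩|⟨h,_⟩) <;> omega) (by rintro (⟨h,_⟩|⟨h,_⟩) <;> omega)
      (by rintro (⟨h,h'⟩|⟨h,h'⟩) <;> omega) (by rintro (⟨h,h'⟩|⟨h,h'⟩) <;> omega)
end

section
/- Every directed co-graph has directed clique-width at most 2. -/
lemma fin2_cases : ∀ a : Fin 2, a = 0 ∨ a = 1
  | 0 => .inl rfl
  | 1 => .inr rfl

lemma cw_congr {k : ℕ} {V : Finset ℕ} {A A' : ℕ → ℕ → Prop} {f f' : ℕ → Fin k}
    (hA : A = A') (hf : f = f') (h : CW k V A f) : CW k V A' f' := by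
  subst hA hf; exact h

lemma cw_zero {V : Finset ℕ} {A : ℕ → ℕ → Prop} {f : ℕ → Fin 2}
    (h : CW 2 V A f) : CW 2 V A (fun _ => 0) := by
  refine cw_congr rfl ?_ (CW.relabel 1 0 h)
  funext x
  rcases fin2_cases (f x) with h | h <;> simp [h]

lemma cw_one {V : Finset ℕ} {A : ℕ → ℕ → Prop}
    (h : CW 2 V A (fun _ => 0)) : CW 2 V A (fun _ => 1) := by
  refine cw_congr rfl ?_ (CW.relabel 0 1 h)
  funext x; simp

lemma dco_cw (V : Finset ℕ) (A : ℕ → ℕ → Prop) (h : DCo V A) :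
    CW 2 V A (fun _ => 0) := by
  induction h with
  | single v => exact CW.vertex v 0
  | @union V₁ V₂ A₁ A₂ hd h1 h2 ih1 ih2 =>
      exact cw_zero (CW.union hd ih1 ih2)
  | @series V₁ V₂ A₁ A₂ hd h1 h2 ih1 ih2 =>
      have hu := CW.union hd ih1 (cw_one ih2)
      have ha := CW.addArcs (1 : Fin 2) 0 (by decide) (CW.addArcs 0 1 (by decide) hu)
      apply cw_zero
      refine cw_congr ?_ rfl ha
      funext x y
      apply propext
      constructor
      · rintro (((h | h) | ⟨hx, hy, hfx, hfy⟩) | ⟨hx, hy, hfx, hfy⟩)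
        · exact .inl h
        · exact .inr (.inl h)
        · right; right; left
          have hx1 : x ∈ V₁ := by
            by_cases p : x ∈ V₁
            · exact p
            · simp [p] at hfx
          have hy1 : y ∉ V₁ := fun p => by simp [p] at hfy
          exact ⟨hx1, (Finset.mem_union.mp hy).resolve_left hy1⟩
        · right; right; right
          have hy1 : y ∈ V₁ := by
            by_cases q : y ∈ V₁
            · exact q
            · simp [q] at hfy
          have hx1 : x ∉ V₁ := fun p => by simp [p] at hfx
          exact ⟨(Finset.mem_union.mp hx).resolve_left hx1, hy1⟩
      · rintro (h | h | ⟨hx, hy⟩ | ⟨hx, hy⟩)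
        · exact .inl (.inl (.inl h))
        · exact .inl (.inl (.inr h))
        · left; right
          have hy' : y ∉ V₁ := Finset.disjoint_right.mp hd hy
          exact ⟨Finset.mem_union_left _ hx, Finset.mem_union_right _ hy,
            by simp [hx], by simp [hy']⟩
        · right
          have hx' : x ∉ V₁ := Finset.disjoint_right.mp hd hx
          exact ⟨Finset.mem_union_right _ hx, Finset.mem_union_left _ hy,
            by simp [hx'], by simp [hy]⟩
  | @order V₁ V₂ A₁ A₂ hd h1 h2 ih1 ih2 =>
      have hu := CW.union hd ih1 (cw_one ih2)
      have ha := CW.addArcs (0 : Fin 2) 1 (by decide) hu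
      apply cw_zero
      refine cw_congr ?_ rfl ha
      funext x y
      apply propext
      constructor
      · rintro ((h | h) | ⟨hx, hy, hfx, hfy⟩)
        · exact .inl h
        · exact .inr (.inl h)
        · right; right
          have hx1 : x ∈ V₁ := by
            by_cases p : x ∈ V₁
            · exact p
            · simp [p] at hfx
          have hy1 : y ∉ V₁ := fun p => by simp [p] at hfy
          exact ⟨hx1, (Finset.mem_union.mp hy).resolve_left hy1⟩
      · rintro (h | h | ⟨hx, hy⟩)
        · exact .inl (.inl h)
        · exact .inl (.inr h)
        · right
          have hy' : y ∉ V₁ := Finset.disjoint_right.mp hd hy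
          exact ⟨Finset.mem_union_left _ hx, Finset.mem_union_right _ hy,
            by simp [hx], by simp [hy']⟩

theorem stmt_14 (V : Finset ℕ) (A : ℕ → ℕ → Prop) (h : DCo V A) :
    ∃ f : ℕ → Fin 2, CW 2 V A f := ⟨_, dco_cw V A h⟩
end

section
/- An undirected graph that can be constructed from a single vertex by repeatedly adding pendant vertices, false twins, and true twins contains no induced cycle of length at least 5. -/
lemma udh_mem {V : Finset ℕ} {E : ℕ → ℕ → Prop} (h : UDH V E) :
    ∀ x y, E x y → x ∈ V ∧ y ∈ V := by
  induction h with
  | single v => intro x y h; exact h.elim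
  | pendant a u ha hu hs ih =>
    intro x y h
    rcases h with h|⟨rfl,rfl⟩|⟨rfl,rfl⟩
    · exact ⟨Finset.mem_insert_of_mem (ih _ _ h).1, Finset.mem_insert_of_mem (ih _ _ h).2⟩
    · exact ⟨Finset.mem_insert_self _ _, Finset.mem_insert_of_mem ha⟩
    · exact ⟨Finset.mem_insert_of_mem ha, Finset.mem_insert_self _ _⟩
  | falseTwin v u hv hu hs ih =>
    intro x y h
    rcases h with h|⟨rfl,h⟩|⟨rfl,h⟩
    · exact ⟨Finset.mem_insert_of_mem (ih _ _ h).1, Finset.mem_insert_of_mem (ih _ _ h).2⟩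
    · exact ⟨Finset.mem_insert_self _ _, Finset.mem_insert_of_mem (ih _ _ h).2⟩
    · exact ⟨Finset.mem_insert_of_mem (ih _ _ h).1, Finset.mem_insert_self _ _⟩
  | trueTwin v u hv hu hs ih =>
    intro x y h
    rcases h with h|⟨rfl,h⟩|⟨rfl,h⟩|⟨rfl,rfl⟩|⟨rfl,rfl⟩
    · exact ⟨Finset.mem_insert_of_mem (ih _ _ h).1, Finset.mem_insert_of_mem (ih _ _ h).2⟩
    · exact ⟨Finset.mem_insert_self _ _, Finset.mem_insert_of_mem (ih _ _ h).2⟩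
    · exact ⟨Finset.mem_insert_of_mem (ih _ _ h).1, Finset.mem_insert_self _ _⟩
    · exact ⟨Finset.mem_insert_self _ _, Finset.mem_insert_of_mem hv⟩
    · exact ⟨Finset.mem_insert_of_mem hv, Finset.mem_insert_self _ _⟩

lemma udh_irrefl {V : Finset ℕ} {E : ℕ → ℕ → Prop} (h : UDH V E) : ∀ x, ¬ E x x := by
  induction h with
  | single v => intro x h; exact h
  | pendant a u ha hu hs ih =>
    intro x hx
    rcases hx with h | ⟨rfl, rfl⟩ | ⟨rfl, h2⟩
    · exact ih x h
    · exact hu ha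
    · exact hu (h2 ▸ ha)
  | falseTwin v u hv hu hs ih =>
    intro x hx
    rcases hx with h | ⟨rfl, h⟩ | ⟨rfl, h⟩
    · exact ih x h
    · exact hu (udh_mem hs _ _ h).2
    · exact hu (udh_mem hs _ _ h).1
  | trueTwin v u hv hu hs ih =>
    intro x hx
    rcases hx with h | ⟨rfl, h⟩ | ⟨rfl, h⟩ | ⟨rfl, h2⟩ | ⟨rfl, h2⟩
    · exact ih x h
    · exact hu (udh_mem hs _ _ h).2
    · exact hu (udh_mem hs _ _ h).1
    · exact hu (h2 ▸ hv)
    · exact hu (h2.symm ▸ hv)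

lemma udh_symm {V : Finset ℕ} {E : ℕ → ℕ → Prop} (h : UDH V E) : ∀ x y, E x y → E y x := by
  induction h with
  | single v => intro x y h; exact h.elim
  | pendant a u _ _ _ ih =>
    intro x y h
    rcases h with h|⟨rfl,rfl⟩|⟨rfl,rfl⟩
    · exact Or.inl (ih _ _ h)
    · exact Or.inr (Or.inr ⟨rfl, rfl⟩)
    · exact Or.inr (Or.inl ⟨rfl, rfl⟩)
  | falseTwin v u _ _ _ ih =>
    intro x y h
    rcases h with h|⟨rfl,h⟩|⟨rfl,h⟩
    · exact Or.inl (ih _ _ h)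
    · exact Or.inr (Or.inr ⟨rfl, ih _ _ h⟩)
    · exact Or.inr (Or.inl ⟨rfl, ih _ _ h⟩)
  | trueTwin v u _ _ _ ih =>
    intro x y h
    rcases h with h|⟨rfl,h⟩|⟨rfl,h⟩|⟨rfl,rfl⟩|⟨rfl,rfl⟩
    · exact Or.inl (ih _ _ h)
    · exact Or.inr (Or.inr (Or.inl ⟨rfl, ih _ _ h⟩))
    · exact Or.inr (Or.inl ⟨rfl, ih _ _ h⟩)
    · exact Or.inr (Or.inr (Or.inr (Or.inr ⟨rfl, rfl⟩)))
    · exact Or.inr (Or.inr (Or.inr (Or.inl ⟨rfl, rfl⟩)))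

lemma smod' (n x : ℕ) (hx : x < n) :
    ((x+1) % n = x + 1 ∧ x + 1 < n) ∨ ((x+1) % n = 0 ∧ x + 1 = n) := by
  rcases Nat.lt_or_ge (x+1) n with h | h
  · exact Or.inl ⟨Nat.mod_eq_of_lt h, h⟩
  · have hxe : x + 1 = n := by omega
    right
    exact ⟨by rw [hxe, Nat.mod_self], hxe⟩

lemma s_inj (n i j : ℕ) (hi : i < n) (hj : j < n) (h : (i+1)%n = (j+1)%n) : i = j := by
  rcases smod' n i hi with ⟨e1,_⟩|⟨e1,_⟩ <;> rcases smod' n j hj with ⟨e2,_⟩|⟨e2,_⟩ <;> omega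

lemma s_ne (n i : ℕ) (hn : 2 ≤ n) (hi : i < n) : (i+1)%n ≠ i := by
  rcases smod' n i hi with ⟨e,_⟩|⟨e,_⟩ <;> omega

lemma mod_fix (n i k : ℕ) (hi : i < n) (hk : 0 < k) (hkn : k < n)
    (h : i = (i + k) % n) : False := by
  rcases Nat.lt_or_ge (i+k) n with hl | hl
  · rw [Nat.mod_eq_of_lt hl] at h; omega
  · have h2 : i + k - n < n := by omega
    have h3 : i + k = (i + k - n) + n := by omega
    rw [h3, Nat.add_mod_right, Nat.mod_eq_of_lt h2] at h
    omega

lemma prev_ex (n : ℕ) (hn : 0 < n) (i : ℕ) (hi : i < n) :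
    ∃ i', i' < n ∧ i = (i'+1) % n := by
  rcases Nat.eq_zero_or_pos i with rfl | hpos
  · exact ⟨n-1, by omega, by rw [Nat.sub_add_cancel hn, Nat.mod_self]⟩
  · exact ⟨i-1, by omega, by rw [Nat.mod_eq_of_lt (by omega)]; omega⟩
lemma sstep (n x : ℕ) : ((x % n) + 1) % n = (x + 1) % n := Nat.mod_add_mod x n 1

lemma key {V : Finset ℕ} {E : ℕ → ℕ → Prop} (h : UDH V E) (n : ℕ) (hn : 5 ≤ n) :
    ∀ c : ℕ → ℕ, (∀ i < n, ∀ j < n, c i = c j → i = j) →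
    (∀ i < n, c i ∈ V) →
    (∀ i < n, ∀ j < n, (E (c i) (c j) ↔ (j = (i + 1) % n ∨ i = (j + 1) % n))) → False := by
  induction h with
  | single v =>
    intro c hinj hmem _
    have h0 := hmem 0 (by omega)
    have h1 := hmem 1 (by omega)
    rw [Finset.mem_singleton] at h0 h1
    have := hinj 0 (by omega) 1 (by omega) (h0.trans h1.symm)
    omega
  | @pendant W F a u ha hu hs ih =>
    intro c hinj hmem hc
    replace hc : ∀ i, i < n → ∀ j, j < n →
        ((F (c i) (c j) ∨ (c i = u ∧ c j = a) ∨ (c i = a ∧ c j = u)) ↔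
          (j = (i + 1) % n ∨ i = (j + 1) % n)) := hc
    by_cases hone : ∃ i, i < n ∧ c i = u
    · obtain ⟨i, hi, hci⟩ := hone
      have hp : (i+1)%n < n := Nat.mod_lt _ (by omega)
      obtain ⟨i', hi', hii'⟩ := prev_ex n (by omega) i hi
      have h1 : c ((i+1)%n) = a := by
        have := (hc i hi _ hp).mpr (Or.inl rfl)
        rcases this with h | ⟨_, h⟩ | ⟨h, _⟩
        · exact absurd (hci ▸ (udh_mem hs _ _ h).1) hu
        · exact h
        · rw [hci] at h; exact absurd (h.symm ▸ ha) hu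
      have h2 : c i' = a := by
        have := (hc i' hi' i hi).mpr (Or.inl hii')
        rcases this with h | ⟨_, h⟩ | ⟨h, _⟩
        · exact absurd (hci ▸ (udh_mem hs _ _ h).2) hu
        · rw [hci] at h; exact absurd (h.symm ▸ ha) hu
        · exact h
      have heq : (i+1)%n = i' := hinj _ hp i' hi' (h1.trans h2.symm)
      rw [← heq, sstep] at hii'
      have h4 : i + 1 + 1 = i + 2 := by omega
      rw [h4] at hii'
      exact mod_fix n i 2 hi (by omega) (by omega) hii'
    · push_neg at hone
      refine ih c hinj ?_ ?_
      · intro k hk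
        have := hmem k hk
        rw [Finset.mem_insert] at this
        rcases this with h | h
        · exact absurd h (hone k hk)
        · exact h
      · intro i hi j hj
        rw [← hc i hi j hj]
        constructor
        · exact Or.inl
        · rintro (h | ⟨h, _⟩ | ⟨_, h⟩)
          · exact h
          · exact absurd h (hone i hi)
          · exact absurd h (hone j hj)
  | @falseTwin W F v u hv hu hs ih =>
    intro c hinj hmem hc
    replace hc : ∀ i, i < n → ∀ j, j < n →
        ((F (c i) (c j) ∨ (c i = u ∧ F v (c j)) ∨ (c j = u ∧ F (c i) v)) ↔
          (j = (i + 1) % n ∨ i = (j + 1) % n)) := hc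
    have eU : ∀ y, (F u y ∨ (u = u ∧ F v y) ∨ (y = u ∧ F u v)) ↔ F v y := by
      intro y
      constructor
      · rintro (h | ⟨_, h⟩ | ⟨_, h⟩)
        · exact absurd (udh_mem hs _ _ h).1 hu
        · exact h
        · exact absurd (udh_mem hs _ _ h).1 hu
      · intro h; exact Or.inr (Or.inl ⟨rfl, h⟩)
    have Ue : ∀ x, (F x u ∨ (x = u ∧ F v u) ∨ (u = u ∧ F x v)) ↔ F x v := by
      intro x
      constructor
      · rintro (h | ⟨_, h⟩ | ⟨_, h⟩)
        · exact absurd (udh_mem hs _ _ h).2 hu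
        · exact absurd (udh_mem hs _ _ h).2 hu
        · exact h
      · intro h; exact Or.inr (Or.inr ⟨rfl, h⟩)
    have ee : ∀ x y, x ≠ u → y ≠ u →
        ((F x y ∨ (x = u ∧ F v y) ∨ (y = u ∧ F x v)) ↔ F x y) := by
      intro x y hx hy
      constructor
      · rintro (h | ⟨h, _⟩ | ⟨h, _⟩)
        · exact h
        · exact absurd h hx
        · exact absurd h hy
      · exact Or.inl
    by_cases hone : ∃ i, i < n ∧ c i = u
    · obtain ⟨i, hi, hci⟩ := hone
      by_cases hvon : ∃ j, j < n ∧ c j = v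
      · obtain ⟨j, hj, hcj⟩ := hvon
        have hij : i ≠ j := by
          intro he
          exact hu (by rw [← hci, he, hcj]; exact hv)
        have hp : (i+1)%n < n := Nat.mod_lt _ (by omega)
        have hpi : (i+1)%n ≠ i := s_ne n i (by omega) hi
        have hcpu : c ((i+1)%n) ≠ u := fun he => hpi (hinj _ hp i hi (he.trans hci.symm))
        have hcju : c j ≠ u := by
          intro he
          exact hu (by rw [← he, hcj]; exact hv)
        have hEvp : F v (c ((i+1)%n)) := by
          have := (hc i hi _ hp).mpr (Or.inl rfl)
          rw [hci] at this
          exact (eU _).mp this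
        have hj2 : j = ((i+1)%n + 1)%n := by
          have := (hc j hj _ hp).mp ((ee (c j) (c ((i+1)%n)) hcju hcpu).mpr (hcj.symm ▸ hEvp))
          rcases this with h | h
          · exact absurd (s_inj n i j hi hj h) hij
          · exact h
        obtain ⟨i', hi', hii'⟩ := prev_ex n (by omega) i hi
        have hi'i : i' ≠ i := fun he => s_ne n i (by omega) hi (he ▸ hii').symm
        have hci'u : c i' ≠ u := fun he => hi'i (hinj i' hi' i hi (he.trans hci.symm))
        have hEi'v : F (c i') v := by
          have := (hc i' hi' i hi).mpr (Or.inl hii')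
          rw [hci] at this
          exact (Ue _).mp this
        have hi'2 : i' = (j+1)%n := by
          have := (hc i' hi' j hj).mp ((ee (c i') (c j) hci'u hcju).mpr (hcj.symm ▸ hEi'v))
          rcases this with h | h
          · exact absurd (hii'.trans h.symm) hij
          · exact h
        rw [sstep] at hj2
        rw [hj2, sstep] at hi'2
        rw [hi'2, sstep] at hii'
        have h4 : i + 1 + 1 + 1 + 1 = i + 4 := by omega
        rw [h4] at hii'
        exact mod_fix n i 4 hi (by omega) (by omega) hii'
      · push_neg at hvon
        refine ih (fun k => if k = i then v else c k) ?_ ?_ ?_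
        · intro a ha b hb hab
          by_cases ha' : a = i <;> by_cases hb' : b = i
          · rw [ha', hb']
          · rw [if_pos ha', if_neg hb'] at hab
            exact absurd hab.symm (hvon b hb)
          · rw [if_neg ha', if_pos hb'] at hab
            exact absurd hab (hvon a ha)
          · rw [if_neg ha', if_neg hb'] at hab
            exact hinj a ha b hb hab
        · intro k hk
          by_cases hk' : k = i
          · rw [if_pos hk']; exact hv
          · rw [if_neg hk']
            have := hmem k hk
            rw [Finset.mem_insert] at this
            rcases this with h | h
            · exact absurd (hinj k hk i hi (h.trans hci.symm)) hk'
            · exact h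
        · intro a ha b hb
          rw [← hc a ha b hb]
          by_cases ha' : a = i <;> by_cases hb' : b = i
          · subst ha'; subst hb'
            rw [if_pos rfl, hci]
            constructor
            · intro h; exact absurd h (udh_irrefl hs v)
            · intro h; exact absurd (udh_mem hs _ _ ((eU u).mp h)).2 hu
          · subst ha'
            rw [if_pos rfl, if_neg hb', hci]
            exact (eU _).symm
          · subst hb'
            rw [if_neg ha', if_pos rfl, hci]
            exact (Ue _).symm
          · rw [if_neg ha', if_neg hb']
            have hau : c a ≠ u := fun he => ha' (hinj a ha i hi (he.trans hci.symm))
            have hbu : c b ≠ u := fun he => hb' (hinj b hb i hi (he.trans hci.symm))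
            exact (ee _ _ hau hbu).symm
    · push_neg at hone
      refine ih c hinj ?_ ?_
      · intro k hk
        have := hmem k hk
        rw [Finset.mem_insert] at this
        rcases this with h | h
        · exact absurd h (hone k hk)
        · exact h
      · intro i hi j hj
        rw [← hc i hi j hj]
        exact (ee _ _ (hone i hi) (hone j hj)).symm
  | @trueTwin W F v u hv hu hs ih =>
    intro c hinj hmem hc
    replace hc : ∀ i, i < n → ∀ j, j < n →
        ((F (c i) (c j) ∨ (c i = u ∧ F v (c j)) ∨ (c j = u ∧ F (c i) v) ∨
          (c i = u ∧ c j = v) ∨ (c i = v ∧ c j = u)) ↔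
          (j = (i + 1) % n ∨ i = (j + 1) % n)) := hc
    have huv : u ≠ v := fun he => hu (he ▸ hv)
    have eU : ∀ y, (F u y ∨ (u = u ∧ F v y) ∨ (y = u ∧ F u v) ∨
        (u = u ∧ y = v) ∨ (u = v ∧ y = u)) ↔ (F v y ∨ y = v) := by
      intro y
      constructor
      · rintro (h | ⟨_, h⟩ | ⟨_, h⟩ | ⟨_, h⟩ | ⟨h, _⟩)
        · exact absurd (udh_mem hs _ _ h).1 hu
        · exact Or.inl h
        · exact absurd (udh_mem hs _ _ h).1 hu
        · exact Or.inr h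
        · exact absurd h huv
      · rintro (h | rfl)
        · exact Or.inr (Or.inl ⟨rfl, h⟩)
        · exact Or.inr (Or.inr (Or.inr (Or.inl ⟨rfl, rfl⟩)))
    have Ue : ∀ x, (F x u ∨ (x = u ∧ F v u) ∨ (u = u ∧ F x v) ∨
        (x = u ∧ u = v) ∨ (x = v ∧ u = u)) ↔ (F x v ∨ x = v) := by
      intro x
      constructor
      · rintro (h | ⟨_, h⟩ | ⟨_, h⟩ | ⟨_, h⟩ | ⟨h, _⟩)
        · exact absurd (udh_mem hs _ _ h).2 hu
        · exact absurd (udh_mem hs _ _ h).2 hu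
        · exact Or.inl h
        · exact absurd h huv
        · exact Or.inr h
      · rintro (h | rfl)
        · exact Or.inr (Or.inr (Or.inl ⟨rfl, h⟩))
        · exact Or.inr (Or.inr (Or.inr (Or.inr ⟨rfl, rfl⟩)))
    have ee : ∀ x y, x ≠ u → y ≠ u →
        ((F x y ∨ (x = u ∧ F v y) ∨ (y = u ∧ F x v) ∨
          (x = u ∧ y = v) ∨ (x = v ∧ y = u)) ↔ F x y) := by
      intro x y hx hy
      constructor
      · rintro (h | ⟨h, _⟩ | ⟨h, _⟩ | ⟨h, _⟩ | ⟨_, h⟩)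
        · exact h
        · exact absurd h hx
        · exact absurd h hy
        · exact absurd h hx
        · exact absurd h hy
      · exact Or.inl
    by_cases hone : ∃ i, i < n ∧ c i = u
    · obtain ⟨i, hi, hci⟩ := hone
      by_cases hvon : ∃ j, j < n ∧ c j = v
      · obtain ⟨j, hj, hcj⟩ := hvon
        have hij : i ≠ j := by
          intro he
          exact hu (by rw [← hci, he, hcj]; exact hv)
        have hcju : c j ≠ u := by
          intro he
          exact hu (by rw [← he, hcj]; exact hv)
        have hadj : j = (i+1)%n ∨ i = (j+1)%n := by
          refine (hc i hi j hj).mp ?_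
          rw [hci, hcj]
          exact Or.inr (Or.inr (Or.inr (Or.inl ⟨rfl, rfl⟩)))
        rcases hadj with hA | hB
        · -- j = s i; use predecessor of i
          obtain ⟨i', hi', hii'⟩ := prev_ex n (by omega) i hi
          have hi'i : i' ≠ i := fun he => s_ne n i (by omega) hi (he ▸ hii').symm
          have hci'u : c i' ≠ u := fun he => hi'i (hinj i' hi' i hi (he.trans hci.symm))
          have hi'j : i' ≠ j := by
            intro he
            rw [he, hA, sstep] at hii'
            have h2 : i + 1 + 1 = i + 2 := by omega
            rw [h2] at hii'
            exact mod_fix n i 2 hi (by omega) (by omega) hii'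
          have hF : F (c i') v := by
            have := (hc i' hi' i hi).mpr (Or.inl hii')
            rw [hci] at this
            rcases (Ue _).mp this with h | h
            · exact h
            · exact absurd (hinj i' hi' j hj (h.trans hcj.symm)) hi'j
          have := (hc i' hi' j hj).mp ((ee (c i') (c j) hci'u hcju).mpr (hcj.symm ▸ hF))
          rcases this with h | h
          · exact absurd (hii'.trans h.symm) hij
          · rw [hA, sstep] at h
            rw [h, sstep] at hii'
            have h4 : i + 1 + 1 + 1 = i + 3 := by omega
            rw [h4] at hii'
            exact mod_fix n i 3 hi (by omega) (by omega) hii'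
        · -- i = s j; use successor of i
          have hp : (i+1)%n < n := Nat.mod_lt _ (by omega)
          have hpi : (i+1)%n ≠ i := s_ne n i (by omega) hi
          have hcpu : c ((i+1)%n) ≠ u := fun he => hpi (hinj _ hp i hi (he.trans hci.symm))
          have hpj : (i+1)%n ≠ j := by
            intro he
            rw [← he, sstep] at hB
            have h2 : i + 1 + 1 = i + 2 := by omega
            rw [h2] at hB
            exact mod_fix n i 2 hi (by omega) (by omega) hB
          have hF : F v (c ((i+1)%n)) := by
            have := (hc i hi _ hp).mpr (Or.inl rfl)
            rw [hci] at this
            rcases (eU _).mp this with h | h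
            · exact h
            · exact absurd (hinj _ hp j hj (h.trans hcj.symm)) hpj
          have := (hc j hj _ hp).mp ((ee (c j) (c ((i+1)%n)) hcju hcpu).mpr (hcj.symm ▸ hF))
          rcases this with h | h
          · exact absurd (hB.trans h.symm) hpi.symm
          · rw [sstep] at h
            rw [h, sstep] at hB
            have h4 : i + 1 + 1 + 1 = i + 3 := by omega
            rw [h4] at hB
            exact mod_fix n i 3 hi (by omega) (by omega) hB
      · push_neg at hvon
        refine ih (fun k => if k = i then v else c k) ?_ ?_ ?_
        · intro a ha b hb hab
          by_cases ha' : a = i <;> by_cases hb' : b = i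
          · rw [ha', hb']
          · rw [if_pos ha', if_neg hb'] at hab
            exact absurd hab.symm (hvon b hb)
          · rw [if_neg ha', if_pos hb'] at hab
            exact absurd hab (hvon a ha)
          · rw [if_neg ha', if_neg hb'] at hab
            exact hinj a ha b hb hab
        · intro k hk
          by_cases hk' : k = i
          · rw [if_pos hk']; exact hv
          · rw [if_neg hk']
            have := hmem k hk
            rw [Finset.mem_insert] at this
            rcases this with h | h
            · exact absurd (hinj k hk i hi (h.trans hci.symm)) hk'
            · exact h
        · intro a ha b hb
          rw [← hc a ha b hb]
          by_cases ha' : a = i <;> by_cases hb' : b = i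
          · subst ha'; subst hb'
            rw [if_pos rfl, hci]
            constructor
            · intro h; exact absurd h (udh_irrefl hs v)
            · intro h
              rcases (eU u).mp h with h2 | h2
              · exact absurd (udh_mem hs _ _ h2).2 hu
              · exact absurd h2 huv
          · subst ha'
            rw [if_pos rfl, if_neg hb', hci]
            constructor
            · intro h; exact (eU _).mpr (Or.inl h)
            · intro h
              rcases (eU _).mp h with h2 | h2
              · exact h2
              · exact absurd h2 (hvon b hb)
          · subst hb'
            rw [if_neg ha', if_pos rfl, hci]
            constructor
            · intro h; exact (Ue _).mpr (Or.inl h)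
            · intro h
              rcases (Ue _).mp h with h2 | h2
              · exact h2
              · exact absurd h2 (hvon a ha)
          · rw [if_neg ha', if_neg hb']
            have hau : c a ≠ u := fun he => ha' (hinj a ha i hi (he.trans hci.symm))
            have hbu : c b ≠ u := fun he => hb' (hinj b hb i hi (he.trans hci.symm))
            exact (ee _ _ hau hbu).symm
    · push_neg at hone
      refine ih c hinj ?_ ?_
      · intro k hk
        have := hmem k hk
        rw [Finset.mem_insert] at this
        rcases this with h | h
        · exact absurd h (hone k hk)
        · exact h
      · intro i hi j hj
        rw [← hc i hi j hj]
        exact (ee _ _ (hone i hi) (hone j hj)).symm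

theorem stmt_15 (V : Finset ℕ) (E : ℕ → ℕ → Prop) (h : UDH V E)
    (n : ℕ) (hn : 5 ≤ n) (c : ℕ → ℕ)
    (hinj : ∀ i < n, ∀ j < n, c i = c j → i = j)
    (hmem : ∀ i < n, c i ∈ V) :
    ¬ ∀ i < n, ∀ j < n, (E (c i) (c j) ↔ (j = (i + 1) % n ∨ i = (j + 1) % n)) := fun hcyc => key h n hn c hinj hmem hcyc
end

section
/- If a digraph G can be constructed from a single vertex using only disjoint unions and directed twin operations (no pendant vertex operations), and G is strongly connected with at least two vertices, then for any two vertices u, v of G, the directed distance from u to v is at most 2. -/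
section Aux

variable {A B : ℕ → ℕ → Prop}

lemma reach_refl (A : ℕ → ℕ → Prop) (x : ℕ) : Reach A x x := ⟨0, rfl⟩

lemma reach_arc {x y : ℕ} (h : A x y) : Reach A x y := ⟨1, y, h, rfl⟩

lemma reach_head {x y z : ℕ} (h : A x y) (h2 : Reach A y z) : Reach A x z := by
  obtain ⟨n, hw⟩ := h2; exact ⟨n + 1, y, h, hw⟩

lemma walk_reach_trans : ∀ {n : ℕ} {x y z : ℕ}, walkLen A n x y → Reach A y z → Reach A x z := by
  intro n
  induction n with
  | zero => intro x y z h h2; cases h; exact h2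
  | succ n ih =>
    intro x y z h h2
    obtain ⟨w, hxw, hw⟩ := h
    exact reach_head hxw (ih hw h2)

lemma reach_trans {x y z : ℕ} (h : Reach A x y) (h2 : Reach A y z) : Reach A x z := by
  obtain ⟨n, hw⟩ := h; exact walk_reach_trans hw h2

lemma reach_mono (hAB : ∀ a b, A a b → B a b) : ∀ {n x y}, walkLen A n x y → Reach B x y := by
  intro n
  induction n with
  | zero => intro x y h; cases h; exact reach_refl B x
  | succ n ih => intro x y h; obtain ⟨w, hxw, hw⟩ := h; exact reach_head (hAB _ _ hxw) (ih hw)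

lemma last_arc : ∀ {n x y}, walkLen A (n + 1) x y → ∃ w, Reach A x w ∧ A w y := by
  intro n
  induction n with
  | zero =>
    intro x y h
    obtain ⟨w, hxw, hw⟩ := h
    cases hw
    exact ⟨x, reach_refl A x, hxw⟩
  | succ n ih =>
    intro x y h
    obtain ⟨w, hxw, hw⟩ := h
    obtain ⟨z, hwz, hzy⟩ := ih hw
    exact ⟨z, reach_head hxw hwz, hzy⟩

lemma confine {A₁ A₂ : ℕ → ℕ → Prop} {V₁ V₂ : Finset ℕ}
    (h1 : ∀ a b, A₁ a b → a ∈ V₁ ∧ b ∈ V₁)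
    (h2 : ∀ a b, A₂ a b → a ∈ V₂ ∧ b ∈ V₂)
    (hd : Disjoint V₁ V₂) :
    ∀ {n x y}, x ∈ V₁ → walkLen (fun a b => A₁ a b ∨ A₂ a b) n x y → walkLen A₁ n x y := by
  intro n
  induction n with
  | zero => intro x y _ h; exact h
  | succ n ih =>
    intro x y hx h
    obtain ⟨w, hxw, hw⟩ := h
    rcases hxw with hxw | hxw
    · exact ⟨w, hxw, ih (h1 _ _ hxw).2 hw⟩
    · exact absurd hx (Finset.disjoint_left.mp hd.symm (h2 _ _ hxw).1)

lemma twin_step {v u : ℕ} {auv avu : Prop} (hvu : v ≠ u)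
    (hnu : ∀ a b, A a b → a ≠ u ∧ b ≠ u) {s t : ℕ}
    (h : twinArc A v u auv avu s t) :
    Reach A (if s = u then v else s) (if t = u then v else t) := by
  rcases h with h | ⟨hs, ht, _⟩ | ⟨hs, ht, _⟩ | ⟨hs, h⟩ | ⟨ht, h⟩
  · rw [if_neg (hnu _ _ h).1, if_neg (hnu _ _ h).2]; exact reach_arc h
  · rw [if_pos hs, ht, if_neg hvu]; exact reach_refl A v
  · rw [hs, if_neg hvu, if_pos ht]; exact reach_refl A v
  · rw [if_pos hs, if_neg (hnu _ _ h).2]; exact reach_arc h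
  · rw [if_pos ht, if_neg (hnu _ _ h).1]; exact reach_arc h

lemma twin_project {v u : ℕ} {auv avu : Prop} (hvu : v ≠ u)
    (hnu : ∀ a b, A a b → a ≠ u ∧ b ≠ u) :
    ∀ {n x y}, walkLen (twinArc A v u auv avu) n x y →
      Reach A (if x = u then v else x) (if y = u then v else y) := by
  intro n
  induction n with
  | zero => intro x y h; cases h; exact reach_refl A _
  | succ n ih =>
    intro x y h
    obtain ⟨w, hxw, hw⟩ := h
    exact reach_trans (twin_step hvu hnu hxw) (ih hw)

lemma arcs_mem {V : Finset ℕ} (h : TwinBuilt V A) : ∀ a b, A a b → a ∈ V ∧ b ∈ V := by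
  induction h with
  | single v => intro a b h; exact absurd h not_false
  | union hd h1 h2 ih1 ih2 =>
    intro a b h
    rcases h with h | h
    · exact ⟨Finset.mem_union_left _ (ih1 _ _ h).1, Finset.mem_union_left _ (ih1 _ _ h).2⟩
    · exact ⟨Finset.mem_union_right _ (ih2 _ _ h).1, Finset.mem_union_right _ (ih2 _ _ h).2⟩
  | twin v u auv avu hv hu hV ih =>
    intro a b h
    rcases h with h | ⟨rfl, rfl, _⟩ | ⟨rfl, rfl, _⟩ | ⟨rfl, h⟩ | ⟨rfl, h⟩
    · exact ⟨Finset.mem_insert_of_mem (ih _ _ h).1, Finset.mem_insert_of_mem (ih _ _ h).2⟩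
    · exact ⟨Finset.mem_insert_self _ _, Finset.mem_insert_of_mem hv⟩
    · exact ⟨Finset.mem_insert_of_mem hv, Finset.mem_insert_self _ _⟩
    · exact ⟨Finset.mem_insert_self _ _, Finset.mem_insert_of_mem (ih _ _ h).2⟩
    · exact ⟨Finset.mem_insert_of_mem (ih _ _ h).1, Finset.mem_insert_self _ _⟩

/-- head version of the 2-cycle lemma, derived from the tail version. -/
lemma head_of_tail (ht : ∀ x y, A x y → Reach A y x → ∃ z, A x z ∧ A z x) :
    ∀ x y, A x y → Reach A y x → ∃ z, A y z ∧ A z y := by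
  intro x y hxy ⟨n, hw⟩
  cases n with
  | zero =>
    rw [show y = x from hw] at hxy ⊢
    exact ⟨x, hxy, hxy⟩
  | succ n =>
    obtain ⟨w, hyw, hwx⟩ := hw
    exact ht y w hyw (walk_reach_trans hwx (reach_arc hxy))

end Aux

lemma confine' {A₁ A₂ : ℕ → ℕ → Prop} {V₁ V₂ : Finset ℕ}
    (h1 : ∀ a b, A₁ a b → a ∈ V₁ ∧ b ∈ V₁)
    (h2 : ∀ a b, A₂ a b → a ∈ V₂ ∧ b ∈ V₂)
    (hd : Disjoint V₁ V₂) :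
    ∀ {n x y}, x ∈ V₂ → walkLen (fun a b => A₁ a b ∨ A₂ a b) n x y → walkLen A₂ n x y := by
  intro n
  induction n with
  | zero => intro x y _ h; exact h
  | succ n ih =>
    intro x y hx h
    obtain ⟨w, hxw, hw⟩ := h
    rcases hxw with hxw | hxw
    · exact absurd hx (Finset.disjoint_left.mp hd (h1 _ _ hxw).1)
    · exact ⟨w, hxw, ih (h2 _ _ hxw).2 hw⟩

/-- Every vertex on a cycle of a twin-built digraph lies on a 2-cycle. -/
lemma two_cycle {V : Finset ℕ} {A : ℕ → ℕ → Prop} (h : TwinBuilt V A) :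
    ∀ x y, A x y → Reach A y x → ∃ z, A x z ∧ A z x := by
  induction h with
  | single v => intro x y h; exact absurd h not_false
  | union hd h1 h2 ih1 ih2 =>
    rename_i V₁ V₂ A₁ A₂
    have m1 := arcs_mem h1
    have m2 := arcs_mem h2
    intro x y hxy ⟨n, hw⟩
    rcases hxy with hxy | hxy
    · have hw1 : walkLen A₁ n y x := confine m1 m2 hd (m1 _ _ hxy).2 hw
      obtain ⟨z, h1z, h2z⟩ := ih1 x y hxy ⟨n, hw1⟩
      exact ⟨z, Or.inl h1z, Or.inl h2z⟩
    · have hw1 : walkLen A₂ n y x := confine' m1 m2 hd (m2 _ _ hxy).2 hw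
      obtain ⟨z, h1z, h2z⟩ := ih2 x y hxy ⟨n, hw1⟩
      exact ⟨z, Or.inr h1z, Or.inr h2z⟩
  | twin v u auv avu hv hu hV ih =>
    rename_i V A
    have hA := arcs_mem hV
    have hvu : v ≠ u := fun h => hu (h ▸ hv)
    have hnu : ∀ a b, A a b → a ≠ u ∧ b ≠ u := by
      intro a b h
      exact ⟨fun e => hu (e ▸ (hA a b h).1), fun e => hu (e ▸ (hA a b h).2)⟩
    have proj := fun {n x y} (h : walkLen (twinArc A v u auv avu) n x y) =>
      twin_project (auv := auv) (avu := avu) hvu hnu h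
    have iht := head_of_tail ih
    have atu : (∃ z, A v z ∧ A z v) →
        ∃ z, twinArc A v u auv avu u z ∧ twinArc A v u auv avu z u := by
      rintro ⟨z, h1, h2⟩
      exact ⟨z, Or.inr (Or.inr (Or.inr (Or.inl ⟨rfl, h1⟩))),
        Or.inr (Or.inr (Or.inr (Or.inr ⟨rfl, h2⟩)))⟩
    intro x y hxy hr
    rcases hxy with hxy | ⟨hx, hy, hauv⟩ | ⟨hx, hy, havu⟩ | ⟨hx, hxy⟩ | ⟨hy, hxy⟩
    · -- old arc
      obtain ⟨n, hw⟩ := hr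
      have := proj hw
      rw [if_neg (hnu _ _ hxy).2, if_neg (hnu _ _ hxy).1] at this
      obtain ⟨z, h1, h2⟩ := ih x y hxy this
      exact ⟨z, Or.inl h1, Or.inl h2⟩
    · -- x = u, y = v, arc u→v present: need 2-cycle at u
      rw [hx] at hr ⊢
      rw [hy] at hr
      by_cases hav : avu
      · exact ⟨v, Or.inr (Or.inl ⟨rfl, rfl, hauv⟩), Or.inr (Or.inr (Or.inl ⟨rfl, rfl, hav⟩))⟩
      · obtain ⟨n, hw⟩ := hr
        cases n with
        | zero => exact absurd (show v = u from hw) hvu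
        | succ n =>
          obtain ⟨w, hvw, hwu⟩ := last_arc hw
          apply atu
          rcases hwu with hwu | ⟨_, he, _⟩ | ⟨hw', _, hav'⟩ | ⟨_, hwu⟩ | ⟨_, hwu⟩
          · exact absurd rfl (hnu _ _ hwu).2
          · exact absurd he.symm hvu
          · exact absurd hav' hav
          · exact absurd rfl (hnu _ _ hwu).2
          · -- A w v with Reach A' v w
            obtain ⟨m, hw2⟩ := hvw
            have := proj hw2
            rw [if_neg hvu, if_neg (hnu _ _ hwu).1] at this
            exact iht w v hwu this
    · -- x = v, y = u, arc v→u present: need 2-cycle at v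
      rw [hx] at hr ⊢
      rw [hy] at hr
      obtain ⟨n, hw⟩ := hr
      cases n with
      | zero => exact absurd (show u = v from hw).symm hvu
      | succ n =>
        obtain ⟨w, huw, hwv⟩ := hw
        rcases huw with huw | ⟨_, hw', hauv'⟩ | ⟨he, _, _⟩ | ⟨_, huw⟩ | ⟨hw', huw⟩
        · exact absurd rfl (hnu _ _ huw).1
        · exact ⟨u, Or.inr (Or.inr (Or.inl ⟨rfl, rfl, havu⟩)),
            Or.inr (Or.inl ⟨rfl, rfl, hauv'⟩)⟩
        · exact absurd he.symm hvu
        · -- A v w, Reach A' w v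
          have := proj hwv
          rw [if_neg (hnu _ _ huw).2, if_neg hvu] at this
          obtain ⟨z, h1, h2⟩ := ih v w huw this
          exact ⟨z, Or.inl h1, Or.inl h2⟩
        · exact absurd rfl (hnu _ _ huw).1
    · -- x = u, A v y: need 2-cycle at u; have Reach A' y u
      rw [hx] at hr ⊢
      apply atu
      obtain ⟨n, hw⟩ := hr
      cases n with
      | zero => exact absurd (show y = u from hw) (hnu _ _ hxy).2
      | succ n =>
        obtain ⟨w, hyw, hwu⟩ := last_arc hw
        rcases hwu with hwu | ⟨_, he, _⟩ | ⟨hw', _, _⟩ | ⟨_, hwu⟩ | ⟨_, hwu⟩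
        · exact absurd rfl (hnu _ _ hwu).2
        · exact absurd he.symm hvu
        · -- w = v: Reach A' y v, A v y
          rw [hw'] at hyw
          obtain ⟨m, hw2⟩ := hyw
          have := proj hw2
          rw [if_neg (hnu _ _ hxy).2, if_neg hvu] at this
          exact ih v y hxy this
        · exact absurd rfl (hnu _ _ hwu).2
        · -- A w v, Reach A' y w
          obtain ⟨m, hw2⟩ := hyw
          have := proj hw2
          rw [if_neg (hnu _ _ hxy).2, if_neg (hnu _ _ hwu).1] at this
          exact ih v y hxy (reach_trans this (reach_arc hwu))
    · -- y = u, A x v: need 2-cycle at x; have Reach A' u x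
      rw [hy] at hr
      obtain ⟨n, hw⟩ := hr
      cases n with
      | zero => exact absurd (show u = x from hw).symm (hnu _ _ hxy).1
      | succ n =>
        obtain ⟨w, huw, hwx⟩ := hw
        have hvx : Reach A v x := by
          rcases huw with huw | ⟨_, hw', _⟩ | ⟨he, _, _⟩ | ⟨_, huw⟩ | ⟨hw', huw⟩
          · exact absurd rfl (hnu _ _ huw).1
          · rw [hw'] at hwx
            have := proj hwx
            rwa [if_neg hvu, if_neg (hnu _ _ hxy).1] at this
          · exact absurd he.symm hvu
          · have := proj hwx
            rw [if_neg (hnu _ _ huw).2, if_neg (hnu _ _ hxy).1] at this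
            exact reach_head huw this
          · exact absurd rfl (hnu _ _ huw).1
        obtain ⟨z, h1, h2⟩ := ih x v hxy hvx
        exact ⟨z, Or.inl h1, Or.inl h2⟩

/-- In a twin-built digraph, reachability implies a walk of length at most 2. -/
lemma near {V : Finset ℕ} {A : ℕ → ℕ → Prop} (h : TwinBuilt V A) :
    ∀ x y, Reach A x y → x = y ∨ A x y ∨ ∃ w, A x w ∧ A w y := by
  induction h with
  | single v =>
    intro x y ⟨n, hw⟩
    cases n with
    | zero => exact Or.inl hw
    | succ n => exact absurd hw.choose_spec.1 not_false
  | union hd h1 h2 ih1 ih2 =>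
    rename_i V₁ V₂ A₁ A₂
    have m1 := arcs_mem h1
    have m2 := arcs_mem h2
    intro x y ⟨n, hw⟩
    cases n with
    | zero => exact Or.inl hw
    | succ n =>
      obtain ⟨w, hxw, hww⟩ := hw
      rcases hxw with hxw | hxw
      · have hw1 : walkLen A₁ n w y := confine m1 m2 hd (m1 _ _ hxw).2 hww
        rcases ih1 x y (reach_head hxw ⟨n, hw1⟩) with h | h | ⟨z, h1, h2⟩
        · exact Or.inl h
        · exact Or.inr (Or.inl (Or.inl h))
        · exact Or.inr (Or.inr ⟨z, Or.inl h1, Or.inl h2⟩)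
      · have hw1 : walkLen A₂ n w y := confine' m1 m2 hd (m2 _ _ hxw).2 hww
        rcases ih2 x y (reach_head hxw ⟨n, hw1⟩) with h | h | ⟨z, h1, h2⟩
        · exact Or.inl h
        · exact Or.inr (Or.inl (Or.inr h))
        · exact Or.inr (Or.inr ⟨z, Or.inr h1, Or.inr h2⟩)
  | twin v u auv avu hv hu hV ih =>
    rename_i V A
    have hA := arcs_mem hV
    have hvu : v ≠ u := fun h => hu (h ▸ hv)
    have hnu : ∀ a b, A a b → a ≠ u ∧ b ≠ u := by
      intro a b h
      exact ⟨fun e => hu (e ▸ (hA a b h).1), fun e => hu (e ▸ (hA a b h).2)⟩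
    have proj := fun {n x y} (h : walkLen (twinArc A v u auv avu) n x y) =>
      twin_project (auv := auv) (avu := avu) hvu hnu h
    have tcyc := two_cycle hV
    have hcyc := head_of_tail tcyc
    intro x y hr
    by_cases hxu : x = u
    · by_cases hyu : y = u
      · exact Or.inl (hxu.trans hyu.symm)
      · rw [hxu] at hr ⊢
        obtain ⟨n, hw⟩ := hr
        have hpv : Reach A v y := by
          have := proj hw
          rwa [if_pos rfl, if_neg hyu] at this
        rcases ih v y hpv with e | hvy | ⟨w, h1, h2⟩
        · -- y = v : need walk u → v of length ≤ 2
          rw [← e] at hw ⊢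
          cases n with
          | zero => exact Or.inl (show u = v from hw)
          | succ n =>
            obtain ⟨w, huw, hww⟩ := hw
            rcases huw with huw | ⟨_, hw', hauv'⟩ | ⟨he, _, _⟩ | ⟨_, huw⟩ | ⟨hw', huw⟩
            · exact absurd rfl (hnu _ _ huw).1
            · exact Or.inr (Or.inl (Or.inr (Or.inl ⟨rfl, rfl, hauv'⟩)))
            · exact absurd he.symm hvu
            · -- A v w and Reach A' w v
              have hwv : Reach A w v := by
                have := proj hww
                rwa [if_neg (hnu _ _ huw).2, if_neg hvu] at this
              obtain ⟨z, h1, h2⟩ := tcyc v w huw hwv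
              exact Or.inr (Or.inr ⟨z, Or.inr (Or.inr (Or.inr (Or.inl ⟨rfl, h1⟩))),
                Or.inl h2⟩)
            · exact absurd rfl (hnu _ _ huw).1
        · exact Or.inr (Or.inl (Or.inr (Or.inr (Or.inr (Or.inl ⟨rfl, hvy⟩)))))
        · exact Or.inr (Or.inr ⟨w, Or.inr (Or.inr (Or.inr (Or.inl ⟨rfl, h1⟩))), Or.inl h2⟩)
    · by_cases hyu : y = u
      · rw [hyu] at hr ⊢
        obtain ⟨n, hw⟩ := hr
        have hpv : Reach A x v := by
          have := proj hw
          rwa [if_neg hxu, if_pos rfl] at this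
        rcases ih x v hpv with e | hxv | ⟨w, h1, h2⟩
        · -- x = v : need walk v → u of length ≤ 2
          rw [e] at hw ⊢
          cases n with
          | zero => exact absurd (show v = u from hw) hvu
          | succ n =>
            obtain ⟨w, hvw, hwu⟩ := last_arc hw
            rcases hwu with hwu | ⟨_, he, _⟩ | ⟨hw', _, havu'⟩ | ⟨_, hwu⟩ | ⟨_, hwu⟩
            · exact absurd rfl (hnu _ _ hwu).2
            · exact absurd he.symm hvu
            · exact Or.inr (Or.inl (Or.inr (Or.inr (Or.inl ⟨rfl, rfl, havu'⟩))))
            · exact absurd rfl (hnu _ _ hwu).2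
            · -- A w v and Reach A' v w
              have hvw' : Reach A v w := by
                obtain ⟨m, hw2⟩ := hvw
                have := proj hw2
                rwa [if_neg hvu, if_neg (hnu _ _ hwu).1] at this
              obtain ⟨z, h1, h2⟩ := hcyc w v hwu hvw'
              exact Or.inr (Or.inr ⟨z, Or.inl h1,
                Or.inr (Or.inr (Or.inr (Or.inr ⟨rfl, h2⟩)))⟩)
        · exact Or.inr (Or.inl (Or.inr (Or.inr (Or.inr (Or.inr ⟨rfl, hxv⟩)))))
        · exact Or.inr (Or.inr ⟨w, Or.inl h1, Or.inr (Or.inr (Or.inr (Or.inr ⟨rfl, h2⟩)))⟩)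
      · obtain ⟨n, hw⟩ := hr
        have := proj hw
        rw [if_neg hxu, if_neg hyu] at this
        rcases ih x y this with e | hxy | ⟨w, h1, h2⟩
        · exact Or.inl e
        · exact Or.inr (Or.inl (Or.inl hxy))
        · exact Or.inr (Or.inr ⟨w, Or.inl h1, Or.inl h2⟩)

theorem stmt_16 (V : Finset ℕ) (A : ℕ → ℕ → Prop) (h : TwinBuilt V A)
    (hsc : StronglyConn A V) (hcard : 2 ≤ V.card) :
    ∀ u ∈ V, ∀ v ∈ V, ddist A u v ≤ 2 := by
  intro u hu v hv
  have hr : Reach A u v := by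
    obtain ⟨n, hw⟩ := hsc u hu v hv
    exact reach_mono (fun a b h => h.1) hw
  rcases near h u v hr with e | huv | ⟨w, h1, h2⟩
  · subst e
    have h0 : (0 : ℕ) ∈ {n | walkLen A n u u} := rfl
    exact le_trans (Nat.sInf_le h0) (by norm_num)
  · have h1 : (1 : ℕ) ∈ {n | walkLen A n u v} := ⟨v, huv, rfl⟩
    exact le_trans (Nat.sInf_le h1) (by norm_num)
  · have h2 : (2 : ℕ) ∈ {n | walkLen A n u v} := ⟨w, h1, v, h2, rfl⟩
    exact Nat.sInf_le h2
end

section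
/- Any digraph on 4 vertices whose underlying undirected graph is a 4-cycle and which is strongly connected contains two vertices with a bidirected pair of arcs between them, or contains no pair of directed twins. -/
lemma walk_last {R : ℕ → ℕ → Prop} : ∀ n u v, walkLen R n u v → u = v ∨ ∃ z, R z v := by
  intro n
  induction n with
  | zero => intro u v h; exact Or.inl h
  | succ n ih =>
    intro u v h
    obtain ⟨z, hz, hw⟩ := h
    rcases ih z v hw with rfl | h'
    · exact Or.inr ⟨u, hz⟩
    · exact Or.inr h'

lemma adjTwin {A : ℕ → ℕ → Prop} {x y w : ℕ} (ht : DTwins A x y)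
    (hwy : w ≠ y) (hadj : A w x ∨ A x w) (h1 : ¬ A w y) (h2 : ¬ A y w) : False := by
  obtain ⟨-, hin, hout⟩ := ht
  rcases hadj with h | h
  · have hm : w ∈ ({z | A z x} \ {y} : Set ℕ) := ⟨h, hwy⟩
    rw [hin] at hm
    exact h1 hm.1
  · have hm : w ∈ ({z | A x z} \ {y} : Set ℕ) := ⟨h, hwy⟩
    rw [hout] at hm
    exact h2 hm.1

lemma nonadjTwin {A : ℕ → ℕ → Prop} {V : Finset ℕ} {x y w : ℕ}
    (ht : DTwins A x y) (hwx : w ≠ x) (hwy : w ≠ y)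
    (hadj : A x w ∨ A w x)
    (hout : ∀ z, A w z → z = x ∨ z = y)
    (hin : ∀ z, A z w → z = x ∨ z = y)
    (hnb1 : ¬(A x w ∧ A w x)) (hnb2 : ¬(A y w ∧ A w y))
    (hxV : x ∈ V) (hwV : w ∈ V)
    (hsc : StronglyConn A V) : False := by
  obtain ⟨-, hinS, houtS⟩ := ht
  rcases hadj with h | h
  · have hyw : A y w := by
      have hm : w ∈ ({z | A x z} \ {y} : Set ℕ) := ⟨h, hwy⟩
      rw [houtS] at hm; exact hm.1
    have hno : ∀ z, ¬ A w z := by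
      intro z hz
      rcases hout z hz with rfl | rfl
      · exact hnb1 ⟨h, hz⟩
      · exact hnb2 ⟨hyw, hz⟩
    obtain ⟨n, hwalk⟩ := hsc w hwV x hxV
    cases n with
    | zero => exact hwx hwalk
    | succ n =>
      obtain ⟨z, hz, -⟩ := hwalk
      exact hno z hz.1
  · have hwy' : A w y := by
      have hm : w ∈ ({z | A z x} \ {y} : Set ℕ) := ⟨h, hwy⟩
      rw [hinS] at hm; exact hm.1
    have hno : ∀ z, ¬ A z w := by
      intro z hz
      rcases hin z hz with rfl | rfl
      · exact hnb1 ⟨hz, h⟩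
      · exact hnb2 ⟨hz, hwy'⟩
    obtain ⟨n, hwalk⟩ := hsc x hxV w hwV
    rcases walk_last n x w hwalk with rfl | ⟨z, hz⟩
    · exact hwx rfl
    · exact hno z hz.1

theorem stmt_18 (V : Finset ℕ) (A : ℕ → ℕ → Prop)
    (hA : ∀ x y, A x y → x ∈ V ∧ y ∈ V)
    (c : ℕ → ℕ) (hinj : ∀ i < 4, ∀ j < 4, c i = c j → i = j)
    (hV : V = (Finset.range 4).image c)
    (hcyc : ∀ i < 4, ∀ j < 4,
      ((A (c i) (c j) ∨ A (c j) (c i)) ↔ (j = (i + 1) % 4 ∨ i = (j + 1) % 4)))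
    (hsc : StronglyConn A V) :
    (∃ x ∈ V, ∃ y ∈ V, x ≠ y ∧ A x y ∧ A y x) ∨
      ¬ ∃ x ∈ V, ∃ y ∈ V, DTwins A x y := by
  by_cases hbi : ∃ x ∈ V, ∃ y ∈ V, x ≠ y ∧ A x y ∧ A y x
  · exact Or.inl hbi
  · right
    rintro ⟨x, hx, y, hy, htw⟩
    have hnb : ∀ a b, a ≠ b → ¬(A a b ∧ A b a) :=
      fun a b hab h => hbi ⟨a, (hA a b h.1).1, b, (hA a b h.1).2, hab, h.1, h.2⟩
    have hmem : ∀ i, i < 4 → c i ∈ V := fun i hi =>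
      hV ▸ Finset.mem_image_of_mem c (Finset.mem_range.2 hi)
    have hneq : ∀ i, i < 4 → ∀ j, j < 4 → i ≠ j → c i ≠ c j :=
      fun i hi j hj hij h => hij (hinj i hi j hj h)
    have hno : ∀ i, i < 4 → ∀ j, j < 4 → ¬(j = (i+1)%4 ∨ i = (j+1)%4) → ¬ A (c i) (c j) :=
      fun i hi j hj h hA' => h ((hcyc i hi j hj).1 (Or.inl hA'))
    have n02 : ¬ A (c 0) (c 2) := hno 0 (by norm_num) 2 (by norm_num) (by decide)
    have n20 : ¬ A (c 2) (c 0) := hno 2 (by norm_num) 0 (by norm_num) (by decide)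
    have n13 : ¬ A (c 1) (c 3) := hno 1 (by norm_num) 3 (by norm_num) (by decide)
    have n31 : ¬ A (c 3) (c 1) := hno 3 (by norm_num) 1 (by norm_num) (by decide)
    have n00 : ¬ A (c 0) (c 0) := hno 0 (by norm_num) 0 (by norm_num) (by decide)
    have n11 : ¬ A (c 1) (c 1) := hno 1 (by norm_num) 1 (by norm_num) (by decide)
    have hVmem : ∀ z, z ∈ V → z = c 0 ∨ z = c 1 ∨ z = c 2 ∨ z = c 3 := by
      intro z hz; rw [hV] at hz
      simp only [Finset.mem_image, Finset.mem_range] at hz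
      obtain ⟨i, hi, rfl⟩ := hz
      interval_cases i <;> simp
    have hout1 : ∀ z, A (c 1) z → z = c 0 ∨ z = c 2 := by
      intro z hz
      rcases hVmem z (hA _ _ hz).2 with rfl | rfl | rfl | rfl
      · exact Or.inl rfl
      · exact absurd hz n11
      · exact Or.inr rfl
      · exact absurd hz n13
    have hin1 : ∀ z, A z (c 1) → z = c 0 ∨ z = c 2 := by
      intro z hz
      rcases hVmem z (hA _ _ hz).1 with rfl | rfl | rfl | rfl
      · exact Or.inl rfl
      · exact absurd hz n11
      · exact Or.inr rfl
      · exact absurd hz n31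
    have hout0 : ∀ z, A (c 0) z → z = c 1 ∨ z = c 3 := by
      intro z hz
      rcases hVmem z (hA _ _ hz).2 with rfl | rfl | rfl | rfl
      · exact absurd hz n00
      · exact Or.inl rfl
      · exact absurd hz n02
      · exact Or.inr rfl
    have hin0 : ∀ z, A z (c 0) → z = c 1 ∨ z = c 3 := by
      intro z hz
      rcases hVmem z (hA _ _ hz).1 with rfl | rfl | rfl | rfl
      · exact absurd hz n00
      · exact Or.inl rfl
      · exact absurd hz n20
      · exact Or.inr rfl
    rw [hV] at hx hy
    simp only [Finset.mem_image, Finset.mem_range] at hx hy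
    obtain ⟨i, hi, rfl⟩ := hx
    obtain ⟨j, hj, rfl⟩ := hy
    have h4 : (0:ℕ) < 4 := by norm_num
    have h41 : (1:ℕ) < 4 := by norm_num
    have h42 : (2:ℕ) < 4 := by norm_num
    have h43 : (3:ℕ) < 4 := by norm_num
    interval_cases i <;> interval_cases j
    -- (0,0)
    · exact htw.1 rfl
    -- (0,1) : w = c 3
    · exact adjTwin htw (hneq 3 h43 1 h41 (by decide))
        ((hcyc 3 h43 0 h4).2 (by decide)) n31 n13
    -- (0,2) : nonadjacent, w = c 1
    · exact nonadjTwin htw (hneq 1 h41 0 h4 (by decide)) (hneq 1 h41 2 h42 (by decide))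
        ((hcyc 0 h4 1 h41).2 (by decide)) hout1 hin1
        (hnb _ _ (hneq 0 h4 1 h41 (by decide)))
        (hnb _ _ (hneq 2 h42 1 h41 (by decide)))
        (hmem 0 h4) (hmem 1 h41) hsc
    -- (0,3) : w = c 1
    · exact adjTwin htw (hneq 1 h41 3 h43 (by decide))
        ((hcyc 1 h41 0 h4).2 (by decide)) n13 n31
    -- (1,0) : w = c 2
    · exact adjTwin htw (hneq 2 h42 0 h4 (by decide))
        ((hcyc 2 h42 1 h41).2 (by decide)) n20 n02
    -- (1,1)
    · exact htw.1 rfl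
    -- (1,2) : w = c 0
    · exact adjTwin htw (hneq 0 h4 2 h42 (by decide))
        ((hcyc 0 h4 1 h41).2 (by decide)) n02 n20
    -- (1,3) : nonadjacent, w = c 0
    · exact nonadjTwin htw (hneq 0 h4 1 h41 (by decide)) (hneq 0 h4 3 h43 (by decide))
        ((hcyc 1 h41 0 h4).2 (by decide)) hout0 hin0
        (hnb _ _ (hneq 1 h41 0 h4 (by decide)))
        (hnb _ _ (hneq 3 h43 0 h4 (by decide)))
        (hmem 1 h41) (hmem 0 h4) hsc
    -- (2,0) : nonadjacent, w = c 1
    · exact nonadjTwin htw (hneq 1 h41 2 h42 (by decide)) (hneq 1 h41 0 h4 (by decide))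
        ((hcyc 2 h42 1 h41).2 (by decide))
        (fun z hz => (hout1 z hz).symm) (fun z hz => (hin1 z hz).symm)
        (hnb _ _ (hneq 2 h42 1 h41 (by decide)))
        (hnb _ _ (hneq 0 h4 1 h41 (by decide)))
        (hmem 2 h42) (hmem 1 h41) hsc
    -- (2,1) : w = c 3
    · exact adjTwin htw (hneq 3 h43 1 h41 (by decide))
        ((hcyc 3 h43 2 h42).2 (by decide)) n31 n13
    -- (2,2)
    · exact htw.1 rfl
    -- (2,3) : w = c 1
    · exact adjTwin htw (hneq 1 h41 3 h43 (by decide))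
        ((hcyc 1 h41 2 h42).2 (by decide)) n13 n31
    -- (3,0) : w = c 2
    · exact adjTwin htw (hneq 2 h42 0 h4 (by decide))
        ((hcyc 2 h42 3 h43).2 (by decide)) n20 n02
    -- (3,1) : nonadjacent, w = c 0
    · exact nonadjTwin htw (hneq 0 h4 3 h43 (by decide)) (hneq 0 h4 1 h41 (by decide))
        ((hcyc 3 h43 0 h4).2 (by decide))
        (fun z hz => (hout0 z hz).symm) (fun z hz => (hin0 z hz).symm)
        (hnb _ _ (hneq 3 h43 0 h4 (by decide)))
        (hnb _ _ (hneq 1 h41 0 h4 (by decide)))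
        (hmem 3 h43) (hmem 0 h4) hsc
    -- (3,2) : w = c 0
    · exact adjTwin htw (hneq 0 h4 2 h42 (by decide))
        ((hcyc 0 h4 3 h43).2 (by decide)) n02 n20
    -- (3,3)
    · exact htw.1 rfl
end

section
/- A digraph whose underlying undirected graph is a path on n ≥ 4 vertices, with both end-edges bidirected (i.e., both arcs present between each endpoint and its unique neighbor), is not a twin-distance-hereditary digraph. -/
lemma twinDH_support {V : Finset ℕ} {A : ℕ → ℕ → Prop} (h : TwinDH V A) :
    ∀ x y, A x y → x ∈ V ∧ y ∈ V := by
  induction h with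
  | single v => intro x y h; exact h.elim
  | union hd h1 h2 ih1 ih2 =>
      intro x y h
      rcases h with h | h
      · exact ⟨Finset.mem_union_left _ (ih1 x y h).1, Finset.mem_union_left _ (ih1 x y h).2⟩
      · exact ⟨Finset.mem_union_right _ (ih2 x y h).1, Finset.mem_union_right _ (ih2 x y h).2⟩
  | twin v u auv avu hv hu h ih =>
      intro x y hxy
      rcases hxy with h' | ⟨rfl, rfl, _⟩ | ⟨rfl, rfl, _⟩ | ⟨rfl, h'⟩ | ⟨rfl, h'⟩
      · exact ⟨Finset.mem_insert_of_mem (ih x y h').1, Finset.mem_insert_of_mem (ih x y h').2⟩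
      · exact ⟨Finset.mem_insert_self _ _, Finset.mem_insert_of_mem hv⟩
      · exact ⟨Finset.mem_insert_of_mem hv, Finset.mem_insert_self _ _⟩
      · exact ⟨Finset.mem_insert_self _ _, Finset.mem_insert_of_mem (ih v y h').2⟩
      · exact ⟨Finset.mem_insert_of_mem (ih x v h').1, Finset.mem_insert_self _ _⟩
  | pendPlus a u ha hu h ih =>
      intro x y hxy
      rcases hxy with h' | ⟨rfl, rfl⟩
      · exact ⟨Finset.mem_insert_of_mem (ih x y h').1, Finset.mem_insert_of_mem (ih x y h').2⟩
      · exact ⟨Finset.mem_insert_self _ _, Finset.mem_insert_of_mem ha⟩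
  | pendMinus a u ha hu h ih =>
      intro x y hxy
      rcases hxy with h' | ⟨rfl, rfl⟩
      · exact ⟨Finset.mem_insert_of_mem (ih x y h').1, Finset.mem_insert_of_mem (ih x y h').2⟩
      · exact ⟨Finset.mem_insert_of_mem ha, Finset.mem_insert_self _ _⟩

lemma twinDH_nonempty {V : Finset ℕ} {A : ℕ → ℕ → Prop} (h : TwinDH V A) : V.Nonempty := by
  induction h with
  | single v => exact ⟨v, Finset.mem_singleton_self v⟩
  | union hd h1 h2 ih1 ih2 =>
      obtain ⟨x, hx⟩ := ih1; exact ⟨x, Finset.mem_union_left _ hx⟩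
  | twin v u auv avu hv hu h ih => exact ⟨u, Finset.mem_insert_self u _⟩
  | pendPlus a u ha hu h ih => exact ⟨u, Finset.mem_insert_self u _⟩
  | pendMinus a u ha hu h ih => exact ⟨u, Finset.mem_insert_self u _⟩

lemma twin_witness (n p q : ℕ) (hn : 4 ≤ n) (hpq : p < q) (hq : q < n) :
    ∃ r, r < n ∧ r ≠ p ∧ r ≠ q ∧
      ¬((p = r + 1 ∨ r = p + 1) ↔ (q = r + 1 ∨ r = q + 1)) := by
  refine ⟨if p = 0 ∧ q = 1 then 2 else if p = 0 ∧ q = 2 then 3 else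
    if q ≤ p + 2 then p - 1 else p + 1, ?_⟩
  split_ifs <;> omega

theorem stmt_19 (n : ℕ) (hn : 4 ≤ n) (c : ℕ → ℕ)
    (hinj : ∀ i < n, ∀ j < n, c i = c j → i = j)
    (V : Finset ℕ) (hV : V = (Finset.range n).image c)
    (A : ℕ → ℕ → Prop) (hA : ∀ x y, A x y → x ∈ V ∧ y ∈ V)
    (hpath : ∀ i < n, ∀ j < n,
      ((A (c i) (c j) ∨ A (c j) (c i)) ↔ (j = i + 1 ∨ i = j + 1)))
    (h01 : A (c 0) (c 1)) (h10 : A (c 1) (c 0))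
    (hend1 : A (c (n - 1)) (c (n - 2))) (hend2 : A (c (n - 2)) (c (n - 1))) :
    ¬ TwinDH V A := by
  intro h
  have hc : ∀ i, i < n → c i ∈ V := by
    intro i hi; rw [hV]; exact Finset.mem_image_of_mem c (Finset.mem_range.mpr hi)
  have hcV : ∀ w ∈ V, ∃ i, i < n ∧ c i = w := by
    intro w hw; rw [hV] at hw
    obtain ⟨i, hi, rfl⟩ := Finset.mem_image.mp hw
    exact ⟨i, Finset.mem_range.mp hi, rfl⟩
  cases h with
  | single v => exact h01
  | @union V₁ V₂ A₁ A₂ hd h1 h2 =>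
      have s1 := twinDH_support h1
      have s2 := twinDH_support h2
      have notV1 : ∀ w ∈ V₂, w ∉ V₁ := fun w hw => Finset.disjoint_right.mp hd hw
      have key : ∀ i, i < n → (c i ∈ V₁ ↔ c 0 ∈ V₁) := by
        intro i
        induction i with
        | zero => intro _; exact Iff.rfl
        | succ j ih =>
            intro hi
            have hj : j < n := by omega
            have step : c j ∈ V₁ ↔ c (j + 1) ∈ V₁ := by
              have adj := (hpath j hj (j + 1) hi).mpr (Or.inl rfl)
              rcases adj with (h' | h') | (h' | h')
              · exact ⟨fun _ => (s1 _ _ h').2, fun _ => (s1 _ _ h').1⟩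
              · have h2' := s2 _ _ h'
                exact ⟨fun hm => (notV1 _ h2'.1 hm).elim, fun hm => (notV1 _ h2'.2 hm).elim⟩
              · exact ⟨fun _ => (s1 _ _ h').1, fun _ => (s1 _ _ h').2⟩
              · have h2' := s2 _ _ h'
                exact ⟨fun hm => (notV1 _ h2'.2 hm).elim, fun hm => (notV1 _ h2'.1 hm).elim⟩
            exact step.symm.trans (ih hj)
      obtain ⟨w1, hw1⟩ := twinDH_nonempty h1
      obtain ⟨w2, hw2⟩ := twinDH_nonempty h2
      obtain ⟨j1, hj1, rfl⟩ := hcV w1 (Finset.mem_union_left _ hw1)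
      obtain ⟨j2, hj2, rfl⟩ := hcV w2 (Finset.mem_union_right _ hw2)
      have h0 : c 0 ∈ V₁ := (key j1 hj1).mp hw1
      exact notV1 _ hw2 ((key j2 hj2).mpr h0)
  | @twin V' A' v u auv avu hv hu hA' =>
      have s := twinDH_support hA'
      have hne : u ≠ v := fun e => hu (e ▸ hv)
      have hne' : ¬ (v = u) := fun e => hne e.symm
      have nu1 : ∀ x, ¬ A' x u := fun x h' => hu (s _ _ h').2
      have nu2 : ∀ x, ¬ A' u x := fun x h' => hu (s _ _ h').1
      have huu : u = u := rfl
      have hvv : v = v := rfl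
      have tw_in : ∀ w, w ≠ u → w ≠ v →
          (twinArc A' v u auv avu w u ↔ twinArc A' v u auv avu w v) := by
        intro w hwu hwv
        have n1 := nu1 w
        have n2 := nu1 v
        simp only [twinArc]
        tauto
      have tw_out : ∀ w, w ≠ u → w ≠ v →
          (twinArc A' v u auv avu u w ↔ twinArc A' v u auv avu v w) := by
        intro w hwu hwv
        have n1 := nu2 w
        have n2 := nu2 v
        simp only [twinArc]
        tauto
      obtain ⟨p, hp, hcp⟩ := hcV u (Finset.mem_insert_self u _)
      obtain ⟨q, hq, hcq⟩ := hcV v (Finset.mem_insert_of_mem hv)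
      have hpq : p ≠ q := fun e => hne (hcp ▸ hcq ▸ e ▸ rfl)
      have final : ∀ r, r < n → r ≠ p → r ≠ q →
          ((p = r + 1 ∨ r = p + 1) ↔ (q = r + 1 ∨ r = q + 1)) := by
        intro r hr hrp hrq
        have hwu : c r ≠ u := fun e => hrp (hinj r hr p hp (e.trans hcp.symm))
        have hwv : c r ≠ v := fun e => hrq (hinj r hr q hq (e.trans hcq.symm))
        have adjp := hpath r hr p hp
        have adjq := hpath r hr q hq
        rw [hcp] at adjp
        rw [hcq] at adjq
        have e1 := tw_in (c r) hwu hwv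
        have e2 := tw_out (c r) hwu hwv
        exact adjp.symm.trans ((or_congr e1 e2).trans adjq)
      rcases Nat.lt_or_ge p q with hlt | hge
      · obtain ⟨r, hr, hrp, hrq, hbad⟩ := twin_witness n p q hn hlt hq
        exact hbad (final r hr hrp hrq)
      · have hlt : q < p := lt_of_le_of_ne hge (Ne.symm hpq)
        obtain ⟨r, hr, hrq, hrp, hbad⟩ := twin_witness n q p hn hlt hp
        exact hbad (final r hr hrp hrq).symm
  | @pendPlus V' A' a u ha hu hA' =>
      have s := twinDH_support hA'
      have no_in : ∀ x, ¬ (A' x u ∨ (x = u ∧ u = a)) := by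
        rintro x (h' | ⟨_, rfl⟩)
        · exact hu (s _ _ h').2
        · exact hu ha
      have out_only : ∀ y, (A' u y ∨ (u = u ∧ y = a)) → y = a := by
        rintro y (h' | ⟨_, rfl⟩)
        · exact absurd (s _ _ h').1 hu
        · rfl
      obtain ⟨p, hp, hcp⟩ := hcV u (Finset.mem_insert_self u _)
      rcases Nat.eq_zero_or_pos p with rfl | hp0
      · exact no_in (c 1) (hcp ▸ h10)
      rcases Nat.lt_or_ge p (n - 1) with hpn | hpn
      · have h1 : p - 1 < n := by omega
        have h2 : p + 1 < n := by omega
        have e1 : c (p + 1) = a := by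
          have adj := (hpath p hp (p + 1) h2).mpr (Or.inl rfl)
          rw [hcp] at adj
          rcases adj with h' | h'
          · exact out_only _ h'
          · exact (no_in _ h').elim
        have e2 : c (p - 1) = a := by
          have adj := (hpath (p - 1) h1 p hp).mpr (Or.inl (by omega))
          rw [hcp] at adj
          rcases adj with h' | h'
          · exact (no_in _ h').elim
          · exact out_only _ h'
        have := hinj (p + 1) h2 (p - 1) h1 (e1.trans e2.symm)
        omega
      · have hpe : p = n - 1 := by omega
        have : c (n - 1) = u := hpe ▸ hcp
        exact no_in (c (n - 2)) (this ▸ hend2)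
  | @pendMinus V' A' a u ha hu hA' =>
      have s := twinDH_support hA'
      have no_out : ∀ y, ¬ (A' u y ∨ (u = a ∧ y = u)) := by
        rintro y (h' | ⟨h'', _⟩)
        · exact hu (s _ _ h').1
        · exact hu (h'' ▸ ha)
      have in_only : ∀ x, (A' x u ∨ (x = a ∧ u = u)) → x = a := by
        rintro x (h' | ⟨rfl, _⟩)
        · exact absurd (s _ _ h').2 hu
        · rfl
      obtain ⟨p, hp, hcp⟩ := hcV u (Finset.mem_insert_self u _)
      rcases Nat.eq_zero_or_pos p with rfl | hp0
      · exact no_out (c 1) (hcp ▸ h01)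
      rcases Nat.lt_or_ge p (n - 1) with hpn | hpn
      · have h1 : p - 1 < n := by omega
        have h2 : p + 1 < n := by omega
        have e1 : c (p + 1) = a := by
          have adj := (hpath p hp (p + 1) h2).mpr (Or.inl rfl)
          rw [hcp] at adj
          rcases adj with h' | h'
          · exact (no_out _ h').elim
          · exact in_only _ h'
        have e2 : c (p - 1) = a := by
          have adj := (hpath (p - 1) h1 p hp).mpr (Or.inl (by omega))
          rw [hcp] at adj
          rcases adj with h' | h'
          · exact in_only _ h'
          · exact (no_out _ h').elim
        have := hinj (p + 1) h2 (p - 1) h1 (e1.trans e2.symm)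
        omega
      · have hpe : p = n - 1 := by omega
        have : c (n - 1) = u := hpe ▸ hcp
        exact no_out (c (n - 2)) (this ▸ hend1)
end
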